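/- Let (X, μ) be a measure space, let s : ℝ × X → ℝ be measurable, and let e_K, e_P : ℝ × X → ℝ be such that for each t ∈ ℝ the functions e_K(t,·) and e_P(t,·) are nonnegative, measurable and integrable with respect to μ. Suppose F ∈ L²(ℝ) satisfies: (1) for every λ ∈ ℝ, lim_{T→∞} ∫_{{x : s(T,x) ≤ λ}} e_K(T,x) dμ(x) = lim_{T→∞} ∫_{{x : s(T,x) ≤ λ}} e_P(T,x) dμ(x) = (1/2)∫_{(-∞,λ]} |F(σ)|² dσ; and (2) for every t ∈ ℝ, ∫_X (e_K(t,x) + e_P(t,x)) dμ(x) = ∫_ℝ |F(σ)|² dσ. Then lim_{T→∞} ( ∫_X e_K(T,x) dμ(x) − ∫_X e_P(T,x) dμ(x) ) = 0. -/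

import Mathlib

open MeasureTheory Filter Topology

/-- Proposition 3.1 (abstract asymptotic equipartition of energy): if the kinetic and
potential energies in the regions `{s(T,·) ≤ λ}` both converge, as `T → ∞`, to half the
mass of `|F|²` on `(-∞, λ]`, and the total energy at each time equals `‖F‖_{L²}²`, then
the total kinetic and potential energies asymptotically agree. -/
theorem equipartition_of_energy
    {X : Type*} [MeasurableSpace X] (μ : Measure X)
    (s eK eP : ℝ × X → ℝ) (F : ℝ → ℝ)
    (hs : Measurable s)
    (heKmeas : ∀ t : ℝ, Measurable fun x => eK (t, x))
    (hePmeas : ∀ t : ℝ, Measurable fun x => eP (t, x))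
    (heKnonneg : ∀ t : ℝ, ∀ x : X, 0 ≤ eK (t, x))
    (hePnonneg : ∀ t : ℝ, ∀ x : X, 0 ≤ eP (t, x))
    (heKint : ∀ t : ℝ, Integrable (fun x => eK (t, x)) μ)
    (hePint : ∀ t : ℝ, Integrable (fun x => eP (t, x)) μ)
    (hF : MemLp F 2 (volume : Measure ℝ))
    (hcond1K : ∀ lam : ℝ,
      Tendsto (fun T => ∫ x in {x | s (T, x) ≤ lam}, eK (T, x) ∂μ) atTop
        (𝓝 ((1 / 2) * ∫ σ in Set.Iic lam, |F σ| ^ 2)))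
    (hcond1P : ∀ lam : ℝ,
      Tendsto (fun T => ∫ x in {x | s (T, x) ≤ lam}, eP (T, x) ∂μ) atTop
        (𝓝 ((1 / 2) * ∫ σ in Set.Iic lam, |F σ| ^ 2)))
    (hcond2 : ∀ t : ℝ, ∫ x, (eK (t, x) + eP (t, x)) ∂μ = ∫ σ : ℝ, |F σ| ^ 2) :
    Tendsto (fun T => (∫ x, eK (T, x) ∂μ) - ∫ x, eP (T, x) ∂μ) atTop (𝓝 0) := by

  set I : ℝ := ∫ σ : ℝ, |F σ| ^ 2 with hI
  have hgint : Integrable (fun σ : ℝ => |F σ| ^ 2) volume := by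
    simpa [sq_abs] using hF.integrable_sq
  have hgnn : ∀ σ : ℝ, 0 ≤ |F σ| ^ 2 := fun σ => sq_nonneg _
  -- ∫ over Iic λ tends to I
  have hJ : Tendsto (fun lam : ℝ => ∫ σ in Set.Iic lam, |F σ| ^ 2) atTop (𝓝 I) :=
    (aecover_Iic (μ := volume) tendsto_id).integral_tendsto_of_countably_generated hgint
  have hsum : ∀ T : ℝ, (∫ x, eK (T, x) ∂μ) + (∫ x, eP (T, x) ∂μ) = I := by
    intro T
    rw [← integral_add (heKint T) (hePint T)]
    exact hcond2 T
  -- K tends to I/2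
  have hK : Tendsto (fun T => ∫ x, eK (T, x) ∂μ) atTop (𝓝 (I / 2)) := by
    rw [Metric.tendsto_nhds]
    intro ε hε
    obtain ⟨lam, hlam⟩ : ∃ lam : ℝ, I - ε / 2 < ∫ σ in Set.Iic lam, |F σ| ^ 2 := by
      have := hJ.eventually (eventually_gt_nhds (show I - ε / 2 < I by linarith))
      exact this.exists
    set J : ℝ := ∫ σ in Set.Iic lam, |F σ| ^ 2 with hJdef
    have hJle : J ≤ I := by
      apply setIntegral_le_integral hgint
      exact ae_of_all _ hgnn
    have h1 := (hcond1K lam).eventually (Metric.ball_mem_nhds _ (by positivity : (0:ℝ) < ε/4))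
    have h2 := (hcond1P lam).eventually (Metric.ball_mem_nhds _ (by positivity : (0:ℝ) < ε/4))
    filter_upwards [h1, h2] with T h1 h2
    simp only [Metric.mem_ball, Real.dist_eq] at h1 h2 ⊢
    have hKle : ∫ x in {x | s (T, x) ≤ lam}, eK (T, x) ∂μ ≤ ∫ x, eK (T, x) ∂μ :=
      setIntegral_le_integral (heKint T) (ae_of_all _ fun x => heKnonneg T x)
    have hPle : ∫ x in {x | s (T, x) ≤ lam}, eP (T, x) ∂μ ≤ ∫ x, eP (T, x) ∂μ :=
      setIntegral_le_integral (hePint T) (ae_of_all _ fun x => hePnonneg T x)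
    have hKlow : I / 2 - ε / 2 < ∫ x, eK (T, x) ∂μ := by
      have := abs_lt.mp h1
      linarith
    have hPlow : I / 2 - ε / 2 < ∫ x, eP (T, x) ∂μ := by
      have := abs_lt.mp h2
      linarith
    have := hsum T
    rw [abs_lt]
    constructor <;> linarith
  have hKP : (fun T => (∫ x, eK (T, x) ∂μ) - ∫ x, eP (T, x) ∂μ)
      = fun T => 2 * (∫ x, eK (T, x) ∂μ) - I := by
    funext T
    have := hsum T
    ring_nf
    linarith
  rw [hKP]
  have : Tendsto (fun T => 2 * (∫ x, eK (T, x) ∂μ) - I) atTop (𝓝 (2 * (I / 2) - I)) :=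
    (hK.const_mul 2).sub_const I
  have h0 : 2 * (I / 2) - I = 0 := by ring
  rwa [h0] at this
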